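/- Let k ≥ 2 and n ≥ 0. Every equivalence class of ≡_k on S_n contains exactly one k-maximal permutation ω, and this ω satisfies Inv(σ) ⊆ Inv(ω) for every σ in the class (it is the maximum of the class for the right weak order). -/

import Mathlib

/-- The `k`-recoil equivalence `≡_k` on `Equiv.Perm (Fin n)`.
Values are 0-indexed: `a : Fin n` represents the value `a+1` of the paper.
`σ ≡_k τ` iff for all values `a < b` with `b - a < k`,
`σ⁻¹(a) < σ⁻¹(b) ↔ τ⁻¹(a) < τ⁻¹(b)`. -/
def recoilEquiv (k n : ℕ) (σ τ : Equiv.Perm (Fin n)) : Prop :=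
  ∀ a b : Fin n, (a : ℕ) < b → (b : ℕ) - a < k →
    (σ.symm a < σ.symm b ↔ τ.symm a < τ.symm b)

/-- The inversion set of a permutation: pairs of values `a < b` that appear
in the order `… b … a …` in the one-line word of `σ`. -/
def invSet {n : ℕ} (σ : Equiv.Perm (Fin n)) : Set (Fin n × Fin n) :=
  {p | p.1 < p.2 ∧ σ.symm p.2 < σ.symm p.1}

/-- The extension `σ̃ : ℤ → ℤ` of `σ ∈ S_n` (1-indexed) fixing all `i ∉ [1, n]`. -/
def extPerm {n : ℕ} (σ : Equiv.Perm (Fin n)) : ℤ → ℤ := fun i =>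
  if h : 0 < i ∧ i ≤ (n : ℤ) then ((σ ⟨(i - 1).toNat, by omega⟩ : Fin n) : ℤ) + 1 else i

/-- The `k`-descent code: `DC k σ ℓ` is `d_{ℓ+1}` of the paper, the rank of
`σ̃(ℓ+1)` among the `k` entries `σ̃(ℓ+1-k+1), …, σ̃(ℓ+1)` (positions 1-indexed). -/
noncomputable def DC (k : ℕ) {n : ℕ} (σ : Equiv.Perm (Fin n)) : Fin n → ℕ := fun ℓ =>
  ((Finset.Icc ((ℓ : ℤ) + 1 - k + 1) ((ℓ : ℤ) + 1)).filter
    (fun j => extPerm σ j ≤ extPerm σ ((ℓ : ℤ) + 1))).card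

/-- `σ` is `k`-minimal: no index `i` with `σ(i) - σ(i+1) ≥ k`. -/
def kMinimal (k : ℕ) {n : ℕ} (σ : Equiv.Perm (Fin n)) : Prop :=
  ¬ ∃ (i : ℕ) (h : i + 1 < n),
      (σ ⟨i + 1, h⟩ : ℕ) + k ≤ (σ ⟨i, Nat.lt_of_succ_lt h⟩ : ℕ)

/-- `σ` is `k`-maximal: no index `i` with `σ(i+1) - σ(i) ≥ k`. -/
def kMaximal (k : ℕ) {n : ℕ} (σ : Equiv.Perm (Fin n)) : Prop :=
  ¬ ∃ (i : ℕ) (h : i + 1 < n),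
      (σ ⟨i, Nat.lt_of_succ_lt h⟩ : ℕ) + k ≤ (σ ⟨i + 1, h⟩ : ℕ)

/-- Shifted concatenation `σ • τ` of two permutations. -/
def shiftConcat {m n : ℕ} (σ : Equiv.Perm (Fin m)) (τ : Equiv.Perm (Fin n)) :
    Equiv.Perm (Fin (m + n)) :=
  finSumFinEquiv.symm.trans ((Equiv.sumCongr σ τ).trans finSumFinEquiv)

/-- `π` is `•`-indecomposable: no proper prefix of positions maps onto
a prefix of values. -/
def indecomposable {n : ℕ} (π : Equiv.Perm (Fin n)) : Prop :=
  ¬ ∃ m : ℕ, 0 < m ∧ m < n ∧ ∀ i : Fin n, (i : ℕ) < m → (π i : ℕ) < m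

open Relation Finset

namespace RecoilAux

variable {k n : ℕ}

/-- one forced step -/
def Step (k : ℕ) {n : ℕ} (ω : Equiv.Perm (Fin n)) (a b : Fin n) : Prop :=
  a < b ∧ (b : ℕ) < a + k ∧ ω.symm a < ω.symm b

lemma recoil_refl (σ : Equiv.Perm (Fin n)) : recoilEquiv k n σ σ := fun _ _ _ _ => Iff.rfl

lemma recoil_symm {σ τ : Equiv.Perm (Fin n)} (h : recoilEquiv k n σ τ) :
    recoilEquiv k n τ σ := fun a b h1 h2 => (h a b h1 h2).symm

lemma recoil_trans {σ τ ρ : Equiv.Perm (Fin n)} (h : recoilEquiv k n σ τ)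
    (h' : recoilEquiv k n τ ρ) : recoilEquiv k n σ ρ :=
  fun a b h1 h2 => (h a b h1 h2).trans (h' a b h1 h2)

lemma kmax_lt {ω : Equiv.Perm (Fin n)} (hω : kMaximal k ω) {i : ℕ} (h : i + 1 < n) :
    (ω ⟨i + 1, h⟩ : ℕ) < (ω ⟨i, Nat.lt_of_succ_lt h⟩ : ℕ) + k := by
  by_contra hc
  exact hω ⟨i, h, by omega⟩

/-- key lemma: in a k-maximal permutation, every non-inversion is forced. -/
lemma reach {ω : Equiv.Perm (Fin n)} (hω : kMaximal k ω) :
    ∀ d (a b : Fin n), a < b → ω.symm a < ω.symm b →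
      ((ω.symm b : ℕ) - ω.symm a) ≤ d → TransGen (Step k ω) a b := by
  intro d
  induction d with
  | zero =>
    intro a b hab hpq hd
    exfalso
    have := Fin.lt_def.mp hpq
    omega
  | succ d ih =>
    intro a b hab hpq hd
    set p := ω.symm a with hp
    set q := ω.symm b with hq
    -- S : positions j in [p, q) with value ≤ a
    have hpn : (p : ℕ) < n := p.isLt
    have hqn : (q : ℕ) < n := q.isLt
    classical
    set S : Finset (Fin n) := Finset.univ.filter
      (fun j : Fin n => p ≤ j ∧ j < q ∧ (ω j : ℕ) ≤ a) with hS
    have hpS : p ∈ S := by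
      simp only [hS, mem_filter, mem_univ, true_and]
      exact ⟨le_refl p, hpq, by simp [hp]⟩
    have hSne : S.Nonempty := ⟨p, hpS⟩
    set r := S.max' hSne with hr
    have hrS : r ∈ S := S.max'_mem hSne
    simp only [hS, mem_filter, mem_univ, true_and] at hrS
    obtain ⟨hpr, hrq, hra⟩ := hrS
    have hr1n : (r : ℕ) + 1 < n := by
      have : (r : ℕ) < q := hrq
      omega
    set r1 : Fin n := ⟨(r : ℕ) + 1, hr1n⟩ with hr1
    set f := ω r1 with hf
    have hfk : (f : ℕ) < (a : ℕ) + k := by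
      have := kmax_lt hω hr1n
      have : (ω r1 : ℕ) < (ω ⟨(r : ℕ), Nat.lt_of_succ_lt hr1n⟩ : ℕ) + k := by
        convert this using 3
      have hre : (⟨(r : ℕ), Nat.lt_of_succ_lt hr1n⟩ : Fin n) = r := by
        apply Fin.ext; rfl
      rw [hre] at this
      omega
    have haf : (a : ℕ) < f := by
      rcases eq_or_lt_of_le (show (r1 : ℕ) ≤ q by exact hrq) with hcase | hcase
      · have : r1 = q := Fin.ext hcase
        rw [this] at hf
        have : f = b := by rw [hf, hq]; simp
        rw [this]; exact hab
      · -- r1 < q, so r1 ∉ S would violate max'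
        by_contra hc
        push_neg at hc
        have hr1S : r1 ∈ S := by
          simp only [hS, mem_filter, mem_univ, true_and]
          refine ⟨?_, ?_, ?_⟩
          · exact le_trans hpr (by exact Nat.le_succ r)
          · exact hcase
          · exact hc
        have := S.le_max' r1 hr1S
        rw [← hr] at this
        simp only [Fin.le_def] at this
        have hr1v : (r1 : ℕ) = (r : ℕ) + 1 := rfl
        omega
    have hsymm_f : ω.symm f = r1 := by rw [hf]; simp
    rcases lt_trichotomy (f : ℕ) (b : ℕ) with hfb | hfb | hfb
    · -- a < f < b : step a f then recurse f b
      have stepaf : Step k ω a f := by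
        refine ⟨by exact haf, by omega, ?_⟩
        rw [hsymm_f, ← hp]
        simp only [Fin.lt_def]
        have hr1v : (r1 : ℕ) = (r : ℕ) + 1 := rfl
        omega
      have hfq : (r1 : ℕ) < q := by
        rcases eq_or_lt_of_le (show (r1 : ℕ) ≤ q from hrq) with hcase | hcase
        · exfalso
          have : r1 = q := Fin.ext hcase
          have : f = b := by rw [hf, this, hq]; simp
          omega
        · exact hcase
      have htail : TransGen (Step k ω) f b := by
        apply ih f b (by exact hfb) (by rw [hsymm_f, ← hq]; exact hfq)
        rw [hsymm_f, ← hq]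
        have hr1v : (r1 : ℕ) = (r : ℕ) + 1 := rfl
        have hpr' : (p : ℕ) ≤ r := hpr
        omega
      exact TransGen.head stepaf htail
    · -- f = b : direct step
      have : f = b := Fin.ext hfb
      exact TransGen.single ⟨hab, by omega, hpq⟩
    · -- f > b : then b < a + k, direct step
      exact TransGen.single ⟨hab, by omega, hpq⟩

lemma step_trans {ω τ : Equiv.Perm (Fin n)} (heq : recoilEquiv k n ω τ)
    {a b : Fin n} (h : TransGen (Step k ω) a b) : τ.symm a < τ.symm b := by
  have h' : TransGen (fun x y : Fin n => τ.symm x < τ.symm y) a b := by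
    refine TransGen.mono ?_ a b h
    rintro x y ⟨hxy, hk', hω⟩
    exact (heq x y hxy (by omega)).mp hω
  have : Transitive (fun x y : Fin n => τ.symm x < τ.symm y) :=
    fun x y z h1 h2 => lt_trans h1 h2
  rwa [@Relation.transGen_eq_self _ _ ⟨this⟩] at h'

/-- maximal elements dominate the class -/
lemma max_dominates {ω τ : Equiv.Perm (Fin n)} (hω : kMaximal k ω)
    (heq : recoilEquiv k n ω τ) : invSet τ ⊆ invSet ω := by
  rintro ⟨a, b⟩ ⟨hab, hinv⟩
  refine ⟨hab, ?_⟩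
  rcases lt_trichotomy (ω.symm b) (ω.symm a) with h | h | h
  · exact h
  · exact absurd (ω.symm.injective h.symm) (ne_of_lt hab)
  · exfalso
    have := step_trans heq (reach hω ((ω.symm b : ℕ) - ω.symm a) a b hab h le_rfl)
    exact absurd this (not_lt.mpr (le_of_lt hinv))

/-- same inversion sets ⇒ equal -/
lemma eq_of_invSet_eq {β ω : Equiv.Perm (Fin n)}
    (h : ∀ a b : Fin n, a < b → (β.symm b < β.symm a ↔ ω.symm b < ω.symm a)) :
    β = ω := by
  have key : ∀ a b : Fin n, β.symm a < β.symm b → ω.symm a < ω.symm b := by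
    intro a b hab
    rcases lt_trichotomy a b with hc | hc | hc
    · rcases lt_trichotomy (ω.symm a) (ω.symm b) with h' | h' | h'
      · exact h'
      · exact absurd (ω.symm.injective h') (ne_of_lt hc)
      · exact absurd ((h a b hc).mpr h') (not_lt.mpr (le_of_lt hab))
    · subst hc; exact absurd hab (lt_irrefl _)
    · exact (h b a hc).mp hab
  -- h : ω.symm ∘ β strict mono
  have hmono : StrictMono (fun p : Fin n => ω.symm (β p)) := by
    intro p q hpq
    apply key
    simp only [Equiv.symm_apply_apply]
    exact hpq
  have hrange : Set.range (fun p : Fin n => ω.symm (β p)) = Set.range (id : Fin n → Fin n) := by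
    have : Function.Surjective (fun p : Fin n => ω.symm (β p)) :=
      (ω.symm.surjective).comp β.surjective
    simp [Set.range_eq_univ.mpr this, Set.range_id]
  haveI : WellFoundedLT (Fin n) := inferInstance
  have : (fun p : Fin n => ω.symm (β p)) = id :=
    (hmono.range_inj strictMono_id).mp hrange
  apply Equiv.ext
  intro p
  have := congrFun this p
  simp only [id_eq] at this
  calc β p = ω (ω.symm (β p)) := by simp
    _ = ω p := by rw [this]

end RecoilAux

namespace RecoilAux

variable {k n : ℕ}

open Classical in
noncomputable def invFS (ω : Equiv.Perm (Fin n)) : Finset (Fin n × Fin n) :=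
  Finset.univ.filter (fun p : Fin n × Fin n => p.1 < p.2 ∧ ω.symm p.2 < ω.symm p.1)

lemma swap_lt_iff {i : ℕ} (h : i + 1 < n) (p q : Fin n)
    (h1 : ¬((p : ℕ) = i ∧ (q : ℕ) = i + 1)) (h2 : ¬((p : ℕ) = i + 1 ∧ (q : ℕ) = i)) :
    (Equiv.swap ⟨i, Nat.lt_of_succ_lt h⟩ ⟨i + 1, h⟩ p <
      Equiv.swap ⟨i, Nat.lt_of_succ_lt h⟩ ⟨i + 1, h⟩ q ↔ p < q) := by
  simp only [Equiv.swap_apply_def, Fin.lt_def, Fin.ext_iff]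
  split_ifs <;> simp_all <;> omega

lemma mul_swap_symm_apply {i : ℕ} (h : i + 1 < n) (ω : Equiv.Perm (Fin n)) (x : Fin n) :
    (ω * Equiv.swap (⟨i, Nat.lt_of_succ_lt h⟩ : Fin n) ⟨i + 1, h⟩).symm x =
      Equiv.swap (⟨i, Nat.lt_of_succ_lt h⟩ : Fin n) ⟨i + 1, h⟩ (ω.symm x) := by
  set sw := Equiv.swap (⟨i, Nat.lt_of_succ_lt h⟩ : Fin n) ⟨i + 1, h⟩ with hsw
  show (ω * sw)⁻¹ x = sw (ω⁻¹ x)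
  rw [mul_inv_rev, Equiv.Perm.mul_apply]
  congr 1

lemma improve (hk : 2 ≤ k) {ω : Equiv.Perm (Fin n)} (hnot : ¬ kMaximal k ω) :
    ∃ ω' : Equiv.Perm (Fin n), recoilEquiv k n ω ω' ∧ (invFS ω).card < (invFS ω').card := by
  rw [kMaximal, not_not] at hnot
  obtain ⟨i, h, hik⟩ := hnot
  set i0 : Fin n := ⟨i, Nat.lt_of_succ_lt h⟩ with hi0
  set i1 : Fin n := ⟨i + 1, h⟩ with hi1
  set u := ω i0 with hu
  set v := ω i1 with hv
  have huv : (u : ℕ) + k ≤ v := hik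
  have huvlt : u < v := by rw [Fin.lt_def]; omega
  set s := Equiv.swap i0 i1 with hs
  set ω' := ω * s with hω'
  have hsymm : ∀ x, ω'.symm x = s (ω.symm x) := mul_swap_symm_apply h ω
  have hsu : ω.symm u = i0 := by rw [hu]; simp
  have hsv : ω.symm v = i1 := by rw [hv]; simp
  refine ⟨ω', ?_, ?_⟩
  · intro a b hab hbk
    rw [hsymm a, hsymm b]
    constructor
    · intro hlt
      rw [hs]
      rw [show (⟨i, Nat.lt_of_succ_lt h⟩ : Fin n) = i0 from rfl,
        show (⟨i + 1, h⟩ : Fin n) = i1 from rfl] at *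
      rw [← swap_lt_iff h (ω.symm a) (ω.symm b) ?h1 ?h2] at hlt
      · exact hlt
      case h1 =>
        rintro ⟨ha, hb⟩
        have ha' : ω.symm a = i0 := Fin.ext ha
        have hb' : ω.symm b = i1 := Fin.ext hb
        have : a = u := by rw [hu, ← ha']; simp
        have : b = v := by rw [hv, ← hb']; simp
        omega
      case h2 =>
        rintro ⟨ha, hb⟩
        have ha' : ω.symm a = i1 := Fin.ext ha
        have hb' : ω.symm b = i0 := Fin.ext hb
        have h1 : a = v := by rw [hv, ← ha']; simp
        have h2 : b = u := by rw [hu, ← hb']; simp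
        rw [h1, h2] at hab
        omega
    · intro hlt
      -- s (ω.symm a) < s (ω.symm b) → ω.symm a < ω.symm b
      rw [← swap_lt_iff h (ω.symm a) (ω.symm b) ?h1 ?h2]
      · exact hlt
      case h1 =>
        rintro ⟨ha, hb⟩
        have ha' : ω.symm a = i0 := Fin.ext ha
        have hb' : ω.symm b = i1 := Fin.ext hb
        have : a = u := by rw [hu, ← ha']; simp
        have : b = v := by rw [hv, ← hb']; simp
        omega
      case h2 =>
        rintro ⟨ha, hb⟩
        have ha' : ω.symm a = i1 := Fin.ext ha
        have hb' : ω.symm b = i0 := Fin.ext hb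
        have h1 : a = v := by rw [hv, ← ha']; simp
        have h2 : b = u := by rw [hu, ← hb']; simp
        rw [h1, h2] at hab
        omega
  · classical
    have hmem : (u, v) ∉ invFS ω := by
      simp only [invFS, mem_filter, mem_univ, true_and, not_and]
      intro _
      rw [hsu, hsv]
      simp only [Fin.lt_def, not_lt]
      exact Nat.le_succ i
    have hins : invFS ω' = insert (u, v) (invFS ω) := by
      ext ⟨a, b⟩
      simp only [invFS, mem_filter, mem_univ, true_and, mem_insert, Prod.mk.injEq]
      constructor
      · rintro ⟨hab, hinv⟩
        by_cases hcase : a = u ∧ b = v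
        · exact Or.inl hcase
        · refine Or.inr ⟨hab, ?_⟩
          rw [hsymm a, hsymm b] at hinv
          rw [← swap_lt_iff h (ω.symm b) (ω.symm a) ?h1 ?h2]
          · exact hinv
          case h1 =>
            rintro ⟨hb', ha'⟩
            have h1 : b = u := by
              have : ω.symm b = i0 := Fin.ext hb'
              rw [hu]; rw [← this]; simp
            have h2 : a = v := by
              have : ω.symm a = i1 := Fin.ext ha'
              rw [hv]; rw [← this]; simp
            rw [h1, h2] at hab
            rw [Fin.lt_def] at hab
            omega
          case h2 =>
            rintro ⟨hb', ha'⟩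
            have h1 : b = v := by
              have : ω.symm b = i1 := Fin.ext hb'
              rw [hv]; rw [← this]; simp
            have h2 : a = u := by
              have : ω.symm a = i0 := Fin.ext ha'
              rw [hu]; rw [← this]; simp
            exact hcase ⟨h2, h1⟩
      · rintro (⟨ha, hb⟩ | ⟨hab, hinv⟩)
        · subst ha; subst hb
          refine ⟨huvlt, ?_⟩
          rw [hsymm, hsymm, hsu, hsv]
          simp only [hs, Equiv.swap_apply_left, Equiv.swap_apply_right]
          rw [Fin.lt_def]
          exact Nat.lt_succ_self i
        · refine ⟨hab, ?_⟩
          rw [hsymm a, hsymm b]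
          rw [swap_lt_iff h (ω.symm b) (ω.symm a) ?h1 ?h2]
          · exact hinv
          case h1 =>
            rintro ⟨hb', ha'⟩
            have h1 : b = u := by
              have : ω.symm b = i0 := Fin.ext hb'
              rw [hu]; rw [← this]; simp
            have h2 : a = v := by
              have : ω.symm a = i1 := Fin.ext ha'
              rw [hv]; rw [← this]; simp
            rw [h1, h2] at hab
            rw [Fin.lt_def] at hab
            omega
          case h2 =>
            rintro ⟨hb', ha'⟩
            have h1 : b = v := by
              have : ω.symm b = i1 := Fin.ext hb'
              rw [hv]; rw [← this]; simp
            have h2 : a = u := by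
              have : ω.symm a = i0 := Fin.ext ha'
              rw [hu]; rw [← this]; simp
            rw [Fin.lt_def] at hinv
            omega
    rw [hins, Finset.card_insert_of_notMem hmem]
    omega

end RecoilAux
/-- every `≡_k` class contains exactly one `k`-maximal
permutation `ω`, and `ω` is the maximum of the class for the right weak
order (`Inv(σ) ⊆ Inv(ω)` for all `σ` in the class). -/
theorem recoil_class_unique_max (k n : ℕ) (hk : 2 ≤ k) (σ : Equiv.Perm (Fin n)) :
    ∃ ω : Equiv.Perm (Fin n),
      recoilEquiv k n σ ω ∧ kMaximal k ω ∧
      (∀ τ, recoilEquiv k n σ τ → invSet τ ⊆ invSet ω) ∧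
      (∀ β, recoilEquiv k n σ β → kMaximal k β → β = ω) := by
  classical
  open RecoilAux in
  set S : Finset (Equiv.Perm (Fin n)) := Finset.univ.filter (fun τ => recoilEquiv k n σ τ)
    with hSdef
  have hσS : σ ∈ S := by simp [hSdef, recoil_refl]
  obtain ⟨ω, hωS, hωmax⟩ := S.exists_max_image (fun τ => (invFS τ).card) ⟨σ, hσS⟩
  have hωeq : recoilEquiv k n σ ω := by
    simp only [hSdef, Finset.mem_filter] at hωS; exact hωS.2
  have hωkmax : kMaximal k ω := by
    by_contra hnot
    obtain ⟨ω', heq', hcard⟩ := improve hk hnot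
    have hω'S : ω' ∈ S := by
      simp only [hSdef, Finset.mem_filter, Finset.mem_univ, true_and]
      exact recoil_trans hωeq heq'
    have := hωmax ω' hω'S
    omega
  have hdom : ∀ τ, recoilEquiv k n σ τ → invSet τ ⊆ invSet ω := by
    intro τ hτ
    exact max_dominates hωkmax (recoil_trans (recoil_symm hωeq) hτ)
  refine ⟨ω, hωeq, hωkmax, hdom, ?_⟩
  intro β hβ hβmax
  have h1 : invSet ω ⊆ invSet β :=
    max_dominates hβmax (recoil_trans (recoil_symm hβ) hωeq)
  have h2 : invSet β ⊆ invSet ω := hdom β hβ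
  apply eq_of_invSet_eq
  intro a b hab
  constructor
  · intro h'
    exact (h2 (show (a, b) ∈ invSet β from ⟨hab, h'⟩)).2
  · intro h'
    exact (h1 (show (a, b) ∈ invSet ω from ⟨hab, h'⟩)).2
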